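/- arXiv:1711.00342 — 5 statements merged into one kernel-verified Lean document; each statement's English description precedes it below -/
import Mathlib

section
/- In the partially linear regression model Y = θ₀T + f₀(X) + ε, T = g₀(X) + η, with E[ε | X, T] = 0 a.s. and E[η | X] = 0 a.s., the moment function m(Z, θ, q, g, μ) = (Y − q − θ(T − g)) · ((T − g)^r − E[η^r | X] − r(T − g)μ), evaluated at θ = θ₀, q = q₀(X) := f₀(X) + θ₀ g₀(X), g = g₀(X), μ = E[η^{r−1} | X], has conditional expectation zero given X. -/
open MeasureTheory ProbabilityTheory Filter

/-- In the partially linear regression model `Y = θ₀ T + f₀(X) + ε`, `T = g₀(X) + η`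
with `E[ε | X, T] = 0` and `E[η | X] = 0` a.s., the moment
`m = (Y − q₀(X) − θ₀(T − g₀(X))) ((T − g₀(X))^r − E[η^r|X] − r (T − g₀(X)) E[η^(r−1)|X])`
(where `q₀ = f₀ + θ₀ g₀` and `η = T − g₀(X)`) has conditional expectation zero given `X`. -/
theorem stmt6 {Ω β : Type*} [MeasurableSpace Ω] [MeasurableSpace β]
    (μ : Measure Ω) [IsProbabilityMeasure μ]
    (X : Ω → β) (T Y : Ω → ℝ) (hX : Measurable X) (hT : Measurable T) (hY : Measurable Y)
    (f₀ g₀ : β → ℝ) (hf₀ : Measurable f₀) (hg₀ : Measurable g₀)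
    (θ₀ : ℝ) (r : ℕ) (hr : 0 < r)
    (hεcond : μ[fun ω => Y ω - θ₀ * T ω - f₀ (X ω)
        | MeasurableSpace.comap (fun ω => (X ω, T ω)) inferInstance] =ᵐ[μ] 0)
    (hηcond : μ[fun ω => T ω - g₀ (X ω) | MeasurableSpace.comap X inferInstance] =ᵐ[μ] 0)
    (hmom : ∀ k : ℕ, Integrable (fun ω => (T ω - g₀ (X ω)) ^ k) μ)
    (hmix : ∀ k : ℕ, Integrable (fun ω => (Y ω - θ₀ * T ω - f₀ (X ω)) * (T ω - g₀ (X ω)) ^ k) μ) :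
    μ[fun ω =>
        (Y ω - (f₀ (X ω) + θ₀ * g₀ (X ω)) - θ₀ * (T ω - g₀ (X ω))) *
          ((T ω - g₀ (X ω)) ^ r
            - (μ[fun ω' => (T ω' - g₀ (X ω')) ^ r | MeasurableSpace.comap X inferInstance]) ω
            - (r : ℝ) * (T ω - g₀ (X ω)) *
              (μ[fun ω' => (T ω' - g₀ (X ω')) ^ (r - 1)
                  | MeasurableSpace.comap X inferInstance]) ω)
      | MeasurableSpace.comap X inferInstance] =ᵐ[μ] 0 := by
  set mX := MeasurableSpace.comap X inferInstance with hmXdef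
  set mXT := MeasurableSpace.comap (fun ω => (X ω, T ω)) inferInstance with hmXTdef
  set ε : Ω → ℝ := fun ω => Y ω - θ₀ * T ω - f₀ (X ω) with hεdef
  set a : Ω → ℝ := μ[fun ω' => (T ω' - g₀ (X ω')) ^ r | mX] with hadef
  set b : Ω → ℝ := μ[fun ω' => (T ω' - g₀ (X ω')) ^ (r - 1) | mX] with hbdef
  set W : Ω → ℝ := fun ω =>
    (T ω - g₀ (X ω)) ^ r - a ω - (r : ℝ) * (T ω - g₀ (X ω)) * b ω with hWdef
  have hmle : mX ≤ mXT := by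
    intro s hs
    obtain ⟨t, ht, rfl⟩ := hs
    exact ⟨Prod.fst ⁻¹' t, measurable_fst ht, rfl⟩
  have hm'le : mXT ≤ _ := (hX.prodMk hT).comap_le
  have hfun : (fun ω =>
        (Y ω - (f₀ (X ω) + θ₀ * g₀ (X ω)) - θ₀ * (T ω - g₀ (X ω))) *
          ((T ω - g₀ (X ω)) ^ r - a ω - (r : ℝ) * (T ω - g₀ (X ω)) * b ω))
      = W * ε := by
    funext ω
    simp only [hWdef, hεdef, Pi.mul_apply]
    ring
  rw [hfun]
  -- measurability of W with respect to mXT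
  have hpair : Measurable[mXT] (fun ω => (X ω, T ω)) := measurable_iff_comap_le.mpr le_rfl
  have hη : Measurable[mXT] (fun ω => T ω - g₀ (X ω)) :=
    (measurable_snd.comp hpair).sub (hg₀.comp (measurable_fst.comp hpair))
  have hW : StronglyMeasurable[mXT] W := by
    apply StronglyMeasurable.sub
    apply StronglyMeasurable.sub
    · exact (hη.pow measurable_const).stronglyMeasurable
    · exact stronglyMeasurable_condExp.mono hmle
    · exact ((measurable_const.mul hη).stronglyMeasurable.mul
        (stronglyMeasurable_condExp.mono hmle))
  by_cases hint : Integrable (W * ε) μ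
  · have hεint : Integrable ε μ := by
      have := hmix 0
      simpa using this
    have h1 : μ[W * ε | mXT] =ᵐ[μ] 0 := by
      refine (condExp_mul_of_stronglyMeasurable_left hW hint hεint).trans ?_
      filter_upwards [hεcond] with ω hω
      simp [Pi.mul_apply, hω]
    calc μ[W * ε | mX] =ᵐ[μ] μ[μ[W * ε | mXT] | mX] :=
          (condExp_condExp_of_le (μ := μ) (f := W * ε) hmle hm'le).symm
      _ =ᵐ[μ] μ[(0 : Ω → ℝ) | mX] := condExp_congr_ae h1
      _ = 0 := condExp_zero
  · rw [condExp_of_not_integrable hint]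
end

section
/- In the partially linear regression model with q₀ = f₀ + θ₀g₀, the gradient in θ of the moment m(Z, θ, q₀(X), g₀(X), E[η^{r−1}|X]) = (Y − q₀(X) − θ(T − g₀(X)))·((T − g₀(X))^r − E[η^r|X] − r(T − g₀(X))E[η^{r−1}|X]) at θ = θ₀ has expectation equal to −E[E[η^{r+1}|X] − r·E[η²|X]·E[η^{r−1}|X]]; in particular it is nonzero whenever E[η^{r+1}] ≠ r·E[E[η²|X]E[η^{r−1}|X]]. -/
open MeasureTheory ProbabilityTheory Filter

/-- Conditional expectation of an `L²` function is in `L²`. -/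
lemma memL2_condexp' {Ω : Type*} {m m0 : MeasurableSpace Ω} (hm : m ≤ m0) {μ : Measure Ω}
    [IsFiniteMeasure μ] {f : Ω → ℝ} (hf : MemLp f 2 μ) : MemLp (μ[f|m]) 2 μ := by
  have heq : ((condExpL2 ℝ ℝ hm (hf.toLp f) : Lp ℝ 2 μ) : Ω → ℝ) =ᵐ[μ] μ[f|m] := by
    refine ae_eq_condExp_of_forall_setIntegral_eq hm (hf.integrable one_le_two)
      (fun s _ _ => ((Lp.memLp _).integrable one_le_two).integrableOn)
      (fun s hs hμs => ?_) (aestronglyMeasurable_condExpL2 hm _)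
    rw [integral_condExpL2_eq hm (hf.toLp f) hs hμs.ne]
    exact integral_congr_ae (ae_restrict_of_ae (MemLp.coeFn_toLp hf))
  exact (Lp.memLp _).ae_eq heq

/-- Product of two `L²` functions is integrable. -/
lemma integrable_mul_of_memL2' {Ω : Type*} {m0 : MeasurableSpace Ω} {μ : Measure Ω}
    {f g : Ω → ℝ} (hf : MemLp f 2 μ) (hg : MemLp g 2 μ) :
    Integrable (fun ω => f ω * g ω) μ := by
  have h : MemLp (f • g) 1 μ :=
    haveI : ENNReal.HolderTriple 2 2 1 := ⟨by simpa using (ENNReal.add_halves 1)⟩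
    hg.smul hf
  simpa [smul_eq_mul, Pi.mul_def] using memLp_one_iff_integrable.mp h

lemma aux_plr' {Ω : Type*} {m0 : MeasurableSpace Ω} {μ : Measure Ω} [IsProbabilityMeasure μ]
    {m : MeasurableSpace Ω} (hm : m ≤ m0) (η : Ω → ℝ) (hη : Measurable[m0] η) (r : ℕ)
    (hηcond : μ[η | m] =ᵐ[μ] 0)
    (hmom : ∀ k : ℕ, Integrable (fun ω => η ω ^ k) μ)
    (hmix : Integrable (fun ω =>
        (μ[fun ω' => η ω' ^ 2 | m]) ω * (μ[fun ω' => η ω' ^ (r - 1) | m]) ω) μ) :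
    ∫ ω, -(η ω) * (η ω ^ r - (μ[fun ω' => η ω' ^ r | m]) ω
        - (r : ℝ) * η ω * (μ[fun ω' => η ω' ^ (r - 1) | m]) ω) ∂μ
      = -((∫ ω, η ω ^ (r + 1) ∂μ)
          - (r : ℝ) * ∫ ω, (μ[fun ω' => η ω' ^ 2 | m]) ω *
              (μ[fun ω' => η ω' ^ (r - 1) | m]) ω ∂μ) := by
  have hmem : ∀ k : ℕ, MemLp (fun ω => η ω ^ k) 2 μ := by
    intro k
    refine (memLp_two_iff_integrable_sq ((hη.pow_const k).aestronglyMeasurable)).mpr ?_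
    simpa [pow_mul] using hmom (k * 2)
  have hη1 : MemLp η 2 μ := by simpa using hmem 1
  have hIη : Integrable η μ := by simpa using hmom 1
  have hErL2 : MemLp (μ[fun ω' => η ω' ^ r | m]) 2 μ := memL2_condexp' hm (hmem r)
  have hEr1L2 : MemLp (μ[fun ω' => η ω' ^ (r - 1) | m]) 2 μ := memL2_condexp' hm (hmem (r - 1))
  have hIA : Integrable (fun ω => η ω ^ (r + 1)) μ := hmom (r + 1)
  have hIB : Integrable (fun ω => (μ[fun ω' => η ω' ^ r | m]) ω * η ω) μ :=
    integrable_mul_of_memL2' hErL2 hη1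
  have hIC : Integrable (fun ω => (μ[fun ω' => η ω' ^ (r - 1) | m]) ω * η ω ^ 2) μ :=
    integrable_mul_of_memL2' hEr1L2 (hmem 2)
  have hBzero : ∫ ω, (μ[fun ω' => η ω' ^ r | m]) ω * η ω ∂μ = 0 := by
    calc ∫ ω, (μ[fun ω' => η ω' ^ r | m]) ω * η ω ∂μ
        = ∫ ω, (μ[(μ[fun ω' => η ω' ^ r | m]) * η | m]) ω ∂μ := (integral_condExp hm).symm
      _ = ∫ ω, ((μ[fun ω' => η ω' ^ r | m]) * μ[η | m]) ω ∂μ :=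
          integral_congr_ae (condExp_mul_of_stronglyMeasurable_left stronglyMeasurable_condExp hIB hIη)
      _ = ∫ _ω, (0 : ℝ) ∂μ := by
          refine integral_congr_ae ?_
          filter_upwards [hηcond] with ω h
          simp [Pi.mul_apply, h]
      _ = 0 := integral_zero _ _
  have hCeq : ∫ ω, (μ[fun ω' => η ω' ^ (r - 1) | m]) ω * η ω ^ 2 ∂μ
      = ∫ ω, (μ[fun ω' => η ω' ^ 2 | m]) ω * (μ[fun ω' => η ω' ^ (r - 1) | m]) ω ∂μ := by
    calc ∫ ω, (μ[fun ω' => η ω' ^ (r - 1) | m]) ω * η ω ^ 2 ∂μ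
        = ∫ ω, (μ[(μ[fun ω' => η ω' ^ (r - 1) | m]) * (fun ω => η ω ^ 2) | m]) ω ∂μ :=
          (integral_condExp hm).symm
      _ = ∫ ω, ((μ[fun ω' => η ω' ^ (r - 1) | m]) * μ[(fun ω => η ω ^ 2) | m]) ω ∂μ :=
          integral_congr_ae
            (condExp_mul_of_stronglyMeasurable_left stronglyMeasurable_condExp hIC (hmom 2))
      _ = ∫ ω, (μ[fun ω' => η ω' ^ 2 | m]) ω * (μ[fun ω' => η ω' ^ (r - 1) | m]) ω ∂μ := by
          simp only [Pi.mul_apply]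
          exact integral_congr_ae (Eventually.of_forall fun ω => mul_comm _ _)
  have hexp : ∫ ω, -(η ω) * (η ω ^ r - (μ[fun ω' => η ω' ^ r | m]) ω
        - (r : ℝ) * η ω * (μ[fun ω' => η ω' ^ (r - 1) | m]) ω) ∂μ
      = ∫ ω, (((μ[fun ω' => η ω' ^ r | m]) ω * η ω
          + (r : ℝ) * ((μ[fun ω' => η ω' ^ (r - 1) | m]) ω * η ω ^ 2)) - η ω ^ (r + 1)) ∂μ :=
    integral_congr_ae (Eventually.of_forall fun ω => by ring)
  have hIC' : Integrable (fun ω => (r : ℝ) * ((μ[fun ω' => η ω' ^ (r - 1) | m]) ω * η ω ^ 2)) μ :=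
    hIC.const_mul (r : ℝ)
  have hIBC : Integrable (fun ω => (μ[fun ω' => η ω' ^ r | m]) ω * η ω
      + (r : ℝ) * ((μ[fun ω' => η ω' ^ (r - 1) | m]) ω * η ω ^ 2)) μ := hIB.add hIC'
  rw [hexp, integral_sub hIBC hIA, integral_add hIB hIC', integral_const_mul, hBzero, hCeq]
  ring

/-- In the PLR model, the `θ`-gradient of the moment of the 2-orthogonal construction,
which equals `−(T − g₀(X)) ((T − g₀(X))^r − E[η^r|X] − r (T − g₀(X)) E[η^(r−1)|X])`,
has expectation `−E[E[η^(r+1)|X] − r E[η²|X] E[η^(r−1)|X]]`; in particular it is nonzero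
whenever `E[η^(r+1)] ≠ r E[E[η²|X] E[η^(r−1)|X]]`. -/
theorem stmt7 {Ω β : Type*} [MeasurableSpace Ω] [MeasurableSpace β]
    (μ : Measure Ω) [IsProbabilityMeasure μ]
    (X : Ω → β) (T Y : Ω → ℝ) (hX : Measurable X) (hT : Measurable T) (hY : Measurable Y)
    (f₀ g₀ : β → ℝ) (hf₀ : Measurable f₀) (hg₀ : Measurable g₀)
    (θ₀ : ℝ) (r : ℕ) (hr : 0 < r)
    (hεcond : μ[fun ω => Y ω - θ₀ * T ω - f₀ (X ω)
        | MeasurableSpace.comap (fun ω => (X ω, T ω)) inferInstance] =ᵐ[μ] 0)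
    (hηcond : μ[fun ω => T ω - g₀ (X ω) | MeasurableSpace.comap X inferInstance] =ᵐ[μ] 0)
    (hmom : ∀ k : ℕ, Integrable (fun ω => (T ω - g₀ (X ω)) ^ k) μ)
    (hmixmom : Integrable (fun ω =>
        (μ[fun ω' => (T ω' - g₀ (X ω')) ^ 2 | MeasurableSpace.comap X inferInstance]) ω *
        (μ[fun ω' => (T ω' - g₀ (X ω')) ^ (r - 1)
            | MeasurableSpace.comap X inferInstance]) ω) μ) :
    (∫ ω, -(T ω - g₀ (X ω)) *
        ((T ω - g₀ (X ω)) ^ r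
          - (μ[fun ω' => (T ω' - g₀ (X ω')) ^ r | MeasurableSpace.comap X inferInstance]) ω
          - (r : ℝ) * (T ω - g₀ (X ω)) *
            (μ[fun ω' => (T ω' - g₀ (X ω')) ^ (r - 1)
                | MeasurableSpace.comap X inferInstance]) ω) ∂μ
      = - ∫ ω,
          ((μ[fun ω' => (T ω' - g₀ (X ω')) ^ (r + 1) | MeasurableSpace.comap X inferInstance]) ω
            - (r : ℝ) *
              ((μ[fun ω' => (T ω' - g₀ (X ω')) ^ 2 | MeasurableSpace.comap X inferInstance]) ω *
               (μ[fun ω' => (T ω' - g₀ (X ω')) ^ (r - 1)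
                  | MeasurableSpace.comap X inferInstance]) ω)) ∂μ)
    ∧ ((∫ ω, (T ω - g₀ (X ω)) ^ (r + 1) ∂μ ≠
          (r : ℝ) * ∫ ω,
            (μ[fun ω' => (T ω' - g₀ (X ω')) ^ 2 | MeasurableSpace.comap X inferInstance]) ω *
            (μ[fun ω' => (T ω' - g₀ (X ω')) ^ (r - 1)
                | MeasurableSpace.comap X inferInstance]) ω ∂μ) →
        (∫ ω, -(T ω - g₀ (X ω)) *
          ((T ω - g₀ (X ω)) ^ r
            - (μ[fun ω' => (T ω' - g₀ (X ω')) ^ r | MeasurableSpace.comap X inferInstance]) ω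
            - (r : ℝ) * (T ω - g₀ (X ω)) *
              (μ[fun ω' => (T ω' - g₀ (X ω')) ^ (r - 1)
                  | MeasurableSpace.comap X inferInstance]) ω) ∂μ) ≠ 0) := by
  have hm : MeasurableSpace.comap X inferInstance ≤ _ := measurable_iff_comap_le.mp hX
  have key : ∫ ω, -(T ω - g₀ (X ω)) *
        ((T ω - g₀ (X ω)) ^ r
          - (μ[fun ω' => (T ω' - g₀ (X ω')) ^ r | MeasurableSpace.comap X inferInstance]) ω
          - (r : ℝ) * (T ω - g₀ (X ω)) *
            (μ[fun ω' => (T ω' - g₀ (X ω')) ^ (r - 1)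
                | MeasurableSpace.comap X inferInstance]) ω) ∂μ
      = -((∫ ω, (T ω - g₀ (X ω)) ^ (r + 1) ∂μ)
          - (r : ℝ) * ∫ ω,
            (μ[fun ω' => (T ω' - g₀ (X ω')) ^ 2 | MeasurableSpace.comap X inferInstance]) ω *
            (μ[fun ω' => (T ω' - g₀ (X ω')) ^ (r - 1)
                | MeasurableSpace.comap X inferInstance]) ω ∂μ) :=
    aux_plr' hm (fun ω => T ω - g₀ (X ω)) (hT.sub (hg₀.comp hX)) r hηcond hmom hmixmom
  have hEp : ∫ ω, (μ[fun ω' => (T ω' - g₀ (X ω')) ^ (r + 1)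
        | MeasurableSpace.comap X inferInstance]) ω ∂μ
      = ∫ ω, (T ω - g₀ (X ω)) ^ (r + 1) ∂μ := integral_condExp hm
  have hsplit : ∫ ω,
        ((μ[fun ω' => (T ω' - g₀ (X ω')) ^ (r + 1) | MeasurableSpace.comap X inferInstance]) ω
          - (r : ℝ) *
            ((μ[fun ω' => (T ω' - g₀ (X ω')) ^ 2 | MeasurableSpace.comap X inferInstance]) ω *
             (μ[fun ω' => (T ω' - g₀ (X ω')) ^ (r - 1)
                | MeasurableSpace.comap X inferInstance]) ω)) ∂μ
      = (∫ ω, (μ[fun ω' => (T ω' - g₀ (X ω')) ^ (r + 1)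
            | MeasurableSpace.comap X inferInstance]) ω ∂μ)
        - (r : ℝ) * ∫ ω,
            (μ[fun ω' => (T ω' - g₀ (X ω')) ^ 2 | MeasurableSpace.comap X inferInstance]) ω *
            (μ[fun ω' => (T ω' - g₀ (X ω')) ^ (r - 1)
                | MeasurableSpace.comap X inferInstance]) ω ∂μ := by
    rw [integral_sub integrable_condExp (hmixmom.const_mul (r : ℝ)), integral_const_mul]
  constructor
  · rw [key, hsplit, hEp]
  · intro hne h0
    rw [key] at h0
    exact hne (sub_eq_zero.mp (neg_eq_zero.mp h0))
end

section
/- In the partially linear regression model, the moment m(Z, θ, q, g, μ) = (Y − q − θ(T − g))·((T − g)^r − E[η^r|X] − r(T − g)μ) satisfies first-order orthogonality: the conditional expectations given X of the partial derivatives of m with respect to q, g, and μ, evaluated at (θ₀, q₀(X), g₀(X), E[η^{r−1}|X]), are all zero almost surely. -/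
open MeasureTheory ProbabilityTheory Filter

/-- Tower property: if the conditional expectation w.r.t. a larger σ-algebra vanishes a.e.,
so does the one w.r.t. a smaller σ-algebra. -/
lemma tower_zero {Ω : Type*} {m0 m1 m2 : MeasurableSpace Ω} (hm12 : m1 ≤ m2) (hm2 : m2 ≤ m0)
    {μ : @Measure Ω m0} [IsProbabilityMeasure μ] {f : Ω → ℝ}
    (h : μ[f|m2] =ᵐ[μ] 0) : μ[f|m1] =ᵐ[μ] 0 :=
  calc μ[f|m1] =ᵐ[μ] μ[μ[f|m2]|m1] := (condExp_condExp_of_le hm12 hm2).symm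
    _ =ᵐ[μ] μ[(0 : Ω → ℝ)|m1] := condExp_congr_ae h
    _ = 0 := condExp_zero

/-- First-order orthogonality of the PLR moment
`m(Z, θ, q, g, μ) = (Y − q − θ(T − g)) ((T − g)^r − E[η^r|X] − r(T − g)μ)`:
the conditional expectations given `X` of its partial derivatives in `q`, `g` and `μ`,
evaluated at `(θ₀, q₀(X), g₀(X), E[η^(r−1)|X])`, vanish almost surely.  Here
`η = T − g₀(X)` and `ε = Y − θ₀ T − f₀(X)`. -/
theorem stmt8 {Ω β : Type*} [MeasurableSpace Ω] [MeasurableSpace β]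
    (μ : Measure Ω) [IsProbabilityMeasure μ]
    (X : Ω → β) (T Y : Ω → ℝ) (hX : Measurable X) (hT : Measurable T) (hY : Measurable Y)
    (f₀ g₀ : β → ℝ) (hf₀ : Measurable f₀) (hg₀ : Measurable g₀)
    (θ₀ : ℝ) (r : ℕ) (hr : 0 < r)
    (hεcond : μ[fun ω => Y ω - θ₀ * T ω - f₀ (X ω)
        | MeasurableSpace.comap (fun ω => (X ω, T ω)) inferInstance] =ᵐ[μ] 0)
    (hηcond : μ[fun ω => T ω - g₀ (X ω) | MeasurableSpace.comap X inferInstance] =ᵐ[μ] 0)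
    (hmom : ∀ k : ℕ, Integrable (fun ω => (T ω - g₀ (X ω)) ^ k) μ)
    (hmix : ∀ k : ℕ, Integrable (fun ω => (Y ω - θ₀ * T ω - f₀ (X ω)) * (T ω - g₀ (X ω)) ^ k) μ) :
    -- ∂m/∂q at the truth
    (μ[fun ω =>
        -((T ω - g₀ (X ω)) ^ r
          - (μ[fun ω' => (T ω' - g₀ (X ω')) ^ r | MeasurableSpace.comap X inferInstance]) ω
          - (r : ℝ) * (T ω - g₀ (X ω)) *
            (μ[fun ω' => (T ω' - g₀ (X ω')) ^ (r - 1)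
                | MeasurableSpace.comap X inferInstance]) ω)
      | MeasurableSpace.comap X inferInstance] =ᵐ[μ] 0)
    ∧
    -- ∂m/∂g at the truth
    (μ[fun ω =>
        θ₀ * ((T ω - g₀ (X ω)) ^ r
          - (μ[fun ω' => (T ω' - g₀ (X ω')) ^ r | MeasurableSpace.comap X inferInstance]) ω
          - (r : ℝ) * (T ω - g₀ (X ω)) *
            (μ[fun ω' => (T ω' - g₀ (X ω')) ^ (r - 1)
                | MeasurableSpace.comap X inferInstance]) ω)
        + (Y ω - θ₀ * T ω - f₀ (X ω)) *
            (-(r : ℝ) * (T ω - g₀ (X ω)) ^ (r - 1)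
              + (r : ℝ) *
                (μ[fun ω' => (T ω' - g₀ (X ω')) ^ (r - 1)
                    | MeasurableSpace.comap X inferInstance]) ω)
      | MeasurableSpace.comap X inferInstance] =ᵐ[μ] 0)
    ∧
    -- ∂m/∂μ at the truth
    (μ[fun ω =>
        (Y ω - θ₀ * T ω - f₀ (X ω)) * (-(r : ℝ) * (T ω - g₀ (X ω)))
      | MeasurableSpace.comap X inferInstance] =ᵐ[μ] 0) := by
  have hm2 : MeasurableSpace.comap (fun ω => (X ω, T ω)) inferInstance
      ≤ ‹MeasurableSpace Ω› := measurable_iff_comap_le.mp (hX.prodMk hT)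
  have hm12 : MeasurableSpace.comap X inferInstance
      ≤ MeasurableSpace.comap (fun ω => (X ω, T ω)) inferInstance := by
    have h1 : MeasurableSpace.comap X (inferInstance : MeasurableSpace β)
        = MeasurableSpace.comap (fun ω => (X ω, T ω))
            (MeasurableSpace.comap Prod.fst inferInstance) := by
      rw [MeasurableSpace.comap_comp]; rfl
    rw [h1]
    exact MeasurableSpace.comap_mono (measurable_iff_comap_le.mp measurable_fst)
  have hm1 := hm12.trans hm2
  set m1 := MeasurableSpace.comap X inferInstance with hm1def
  set m2 := MeasurableSpace.comap (fun ω => (X ω, T ω)) inferInstance with hm2def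
  have hπ : Measurable[m2] (fun ω => (X ω, T ω)) := by
    rw [hm2def]; exact measurable_iff_comap_le.mpr le_rfl
  have hηmeas : Measurable[m2] (fun ω => T ω - g₀ (X ω)) := by
    exact Measurable.sub (measurable_snd.comp hπ) ((hg₀.comp measurable_fst).comp hπ)
  have hε_int : Integrable (fun ω => Y ω - θ₀ * T ω - f₀ (X ω)) μ := by
    simpa using hmix 0
  have hη_int : Integrable (fun ω => T ω - g₀ (X ω)) μ := by
    simpa using hmom 1
  -- conditional expectation of ε given X vanishes
  have hε1 : μ[fun ω => Y ω - θ₀ * T ω - f₀ (X ω)|m1] =ᵐ[μ] 0 :=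
    tower_zero hm12 hm2 hεcond
  -- conditional expectation of ε ⬝ η^k given X vanishes
  have hεη : ∀ k : ℕ,
      μ[fun ω => (Y ω - θ₀ * T ω - f₀ (X ω)) * (T ω - g₀ (X ω)) ^ k|m1] =ᵐ[μ] 0 := by
    intro k
    refine tower_zero hm12 hm2 ?_
    have hsm : StronglyMeasurable[m2] (fun ω => (T ω - g₀ (X ω)) ^ k) :=
      (hηmeas.pow_const k).stronglyMeasurable
    have hint : Integrable ((fun ω => (T ω - g₀ (X ω)) ^ k)
        * (fun ω => Y ω - θ₀ * T ω - f₀ (X ω))) μ :=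
      (hmix k).congr (Filter.Eventually.of_forall fun ω => mul_comm _ _)
    have key := condExp_mul_of_stronglyMeasurable_left (μ := μ) hsm hint hε_int
    have h2 : μ[fun ω => (Y ω - θ₀ * T ω - f₀ (X ω)) * (T ω - g₀ (X ω)) ^ k|m2]
        =ᵐ[μ] μ[(fun ω => (T ω - g₀ (X ω)) ^ k)
          * (fun ω => Y ω - θ₀ * T ω - f₀ (X ω))|m2] :=
      condExp_congr_ae (Filter.Eventually.of_forall fun ω => mul_comm _ _)
    refine h2.trans (key.trans ?_)
    filter_upwards [hεcond] with ω h
    simp only [Pi.mul_apply, Pi.zero_apply] at h ⊢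
    rw [h, mul_zero]
  set c := μ[fun ω' => (T ω' - g₀ (X ω')) ^ (r - 1)|m1] with hcdef
  set Cr := μ[fun ω' => (T ω' - g₀ (X ω')) ^ r|m1] with hCrdef
  have hc_sm : StronglyMeasurable[m1] c := by
    rw [hcdef]; exact stronglyMeasurable_condExp
  have hCr_int : Integrable Cr μ := by
    rw [hCrdef]; exact integrable_condExp
  have hCr_eq : μ[Cr|m1] = Cr := by
    rw [hCrdef]
    exact condExp_of_stronglyMeasurable hm1 stronglyMeasurable_condExp integrable_condExp
  -- generic helpers
  have hconstmul : ∀ (a : ℝ) (f : Ω → ℝ), μ[f|m1] =ᵐ[μ] 0 →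
      μ[fun ω => a * f ω|m1] =ᵐ[μ] 0 := by
    intro a f hf
    have h1 : μ[a • f|m1] =ᵐ[μ] a • μ[f|m1] := condExp_smul a f m1
    have h2 : μ[fun ω => a * f ω|m1] =ᵐ[μ] μ[a • f|m1] :=
      condExp_congr_ae (Filter.EventuallyEq.of_eq (funext fun ω => rfl))
    refine h2.trans (h1.trans ?_)
    filter_upwards [hf] with ω h
    simp only [Pi.smul_apply, Pi.zero_apply, smul_eq_mul] at h ⊢
    rw [h, mul_zero]
  have haddz : ∀ f g : Ω → ℝ, Integrable f μ → Integrable g μ →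
      μ[f|m1] =ᵐ[μ] 0 → μ[g|m1] =ᵐ[μ] 0 →
      μ[fun ω => f ω + g ω|m1] =ᵐ[μ] 0 := by
    intro f g hf hg hf0 hg0
    have h1 : μ[fun ω => f ω + g ω|m1] =ᵐ[μ] μ[f|m1] + μ[g|m1] :=
      (condExp_congr_ae (Filter.EventuallyEq.of_eq (funext fun ω => rfl))).trans
        (condExp_add hf hg m1)
    refine h1.trans ?_
    filter_upwards [hf0, hg0] with ω h1 h2
    simp only [Pi.add_apply, Pi.zero_apply] at h1 h2 ⊢
    rw [h1, h2, add_zero]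
  -- pull-out of c at level m1
  have hpull : ∀ v : Ω → ℝ, Integrable v μ → (μ[v|m1] =ᵐ[μ] 0) →
      Integrable (fun ω => c ω * v ω) μ → μ[fun ω => c ω * v ω|m1] =ᵐ[μ] 0 := by
    intro v hv hv0 hcv
    have key : μ[c * v|m1] =ᵐ[μ] c * μ[v|m1] :=
      condExp_mul_of_stronglyMeasurable_left hc_sm (by exact hcv) hv
    have h2 : μ[fun ω => c ω * v ω|m1] =ᵐ[μ] μ[c * v|m1] :=
      condExp_congr_ae (Filter.EventuallyEq.of_eq (funext fun ω => rfl))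
    refine h2.trans (key.trans ?_)
    filter_upwards [hv0] with ω h
    simp only [Pi.mul_apply, Pi.zero_apply] at h ⊢
    rw [h, mul_zero]
  -- E[η^r - Cr | X] = 0 and its negation
  have hA : μ[fun ω => (T ω - g₀ (X ω)) ^ r - Cr ω|m1] =ᵐ[μ] 0 := by
    have h1 : μ[(fun ω => (T ω - g₀ (X ω)) ^ r) - Cr|m1]
        =ᵐ[μ] μ[fun ω => (T ω - g₀ (X ω)) ^ r|m1] - μ[Cr|m1] :=
      condExp_sub (hmom r) hCr_int m1
    have h2 : μ[fun ω => (T ω - g₀ (X ω)) ^ r - Cr ω|m1]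
        =ᵐ[μ] μ[(fun ω => (T ω - g₀ (X ω)) ^ r) - Cr|m1] :=
      condExp_congr_ae (Filter.EventuallyEq.of_eq (funext fun ω => rfl))
    refine h2.trans (h1.trans ?_)
    rw [hCr_eq, ← hCrdef, sub_self]
  have hηcm : Integrable (fun ω => c ω * (T ω - g₀ (X ω))) μ →
      μ[fun ω => c ω * (T ω - g₀ (X ω))|m1] =ᵐ[μ] 0 :=
    fun h => hpull _ hη_int hηcond h
  have hr' : (r : ℝ) ≠ 0 := Nat.cast_ne_zero.mpr hr.ne'
  refine ⟨?_, ?_, ?_⟩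
  · -- ∂m/∂q
    by_cases hic : Integrable (fun ω => c ω * (T ω - g₀ (X ω))) μ
    · have e : (fun ω => -((T ω - g₀ (X ω)) ^ r - Cr ω
            - (r : ℝ) * (T ω - g₀ (X ω)) * c ω))
          = fun ω => (Cr ω - (T ω - g₀ (X ω)) ^ r)
            + (r : ℝ) * (c ω * (T ω - g₀ (X ω))) := by
        funext ω; ring
      rw [e]
      refine haddz _ _ (by exact hCr_int.sub (hmom r)) (hic.const_mul _) ?_
        (hconstmul _ _ (hηcm hic))
      have h1 : μ[fun ω => Cr ω - (T ω - g₀ (X ω)) ^ r|m1]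
          =ᵐ[μ] μ[Cr - (fun ω => (T ω - g₀ (X ω)) ^ r)|m1] :=
        condExp_congr_ae (Filter.EventuallyEq.of_eq (funext fun ω => rfl))
      refine h1.trans ((condExp_sub hCr_int (hmom r) m1).trans ?_)
      rw [hCr_eq, ← hCrdef, sub_self]
    · have hnot : ¬ Integrable (fun ω => -((T ω - g₀ (X ω)) ^ r - Cr ω
          - (r : ℝ) * (T ω - g₀ (X ω)) * c ω)) μ := by
        intro hF
        apply hic
        have e2 : (fun ω => c ω * (T ω - g₀ (X ω)))
            = fun ω => (r : ℝ)⁻¹ * ((-((T ω - g₀ (X ω)) ^ r - Cr ω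
                - (r : ℝ) * (T ω - g₀ (X ω)) * c ω))
              + ((T ω - g₀ (X ω)) ^ r - Cr ω)) := by
          funext ω; field_simp; ring
        rw [e2]
        exact (hF.add (by exact (hmom r).sub hCr_int)).const_mul _
      rw [condExp_of_not_integrable hnot]
  · -- ∂m/∂g
    by_cases hic : Integrable (fun ω => c ω * ((Y ω - θ₀ * T ω - f₀ (X ω))
        - θ₀ * (T ω - g₀ (X ω)))) μ
    · have e : (fun ω => θ₀ * ((T ω - g₀ (X ω)) ^ r - Cr ω
            - (r : ℝ) * (T ω - g₀ (X ω)) * c ω)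
          + (Y ω - θ₀ * T ω - f₀ (X ω)) *
            (-(r : ℝ) * (T ω - g₀ (X ω)) ^ (r - 1) + (r : ℝ) * c ω))
          = fun ω => (θ₀ * ((T ω - g₀ (X ω)) ^ r - Cr ω)
              + (-(r : ℝ)) * ((Y ω - θ₀ * T ω - f₀ (X ω)) * (T ω - g₀ (X ω)) ^ (r - 1)))
            + (r : ℝ) * (c ω * ((Y ω - θ₀ * T ω - f₀ (X ω))
              - θ₀ * (T ω - g₀ (X ω)))) := by
        funext ω; ring
      rw [e]
      have hw_int : Integrable (fun ω => (Y ω - θ₀ * T ω - f₀ (X ω))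
          - θ₀ * (T ω - g₀ (X ω))) μ := by
        exact hε_int.sub (hη_int.const_mul θ₀)
      have hw0 : μ[fun ω => (Y ω - θ₀ * T ω - f₀ (X ω))
          - θ₀ * (T ω - g₀ (X ω))|m1] =ᵐ[μ] 0 := by
        have h1 : μ[fun ω => (Y ω - θ₀ * T ω - f₀ (X ω)) - θ₀ * (T ω - g₀ (X ω))|m1]
            =ᵐ[μ] μ[fun ω => Y ω - θ₀ * T ω - f₀ (X ω)|m1]
              - μ[fun ω => θ₀ * (T ω - g₀ (X ω))|m1] :=
          (condExp_congr_ae (Filter.EventuallyEq.of_eq (funext fun ω => rfl))).trans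
            (condExp_sub hε_int (hη_int.const_mul θ₀) m1)
        refine h1.trans ?_
        filter_upwards [hε1, hconstmul θ₀ _ hηcond] with ω h1 h2
        simp only [Pi.sub_apply, Pi.zero_apply] at h1 h2 ⊢
        rw [h1, h2, sub_zero]
      refine haddz _ _ ?_ (hic.const_mul _) ?_ (hconstmul _ _ (hpull _ hw_int hw0 hic))
      · exact (((hmom r).sub hCr_int).const_mul θ₀).add ((hmix (r - 1)).const_mul _)
      · exact haddz _ _ (by exact ((hmom r).sub hCr_int).const_mul θ₀)
          ((hmix (r - 1)).const_mul _) (hconstmul _ _ hA) (hconstmul _ _ (hεη (r - 1)))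
    · have hnot : ¬ Integrable (fun ω => θ₀ * ((T ω - g₀ (X ω)) ^ r - Cr ω
          - (r : ℝ) * (T ω - g₀ (X ω)) * c ω)
          + (Y ω - θ₀ * T ω - f₀ (X ω)) *
            (-(r : ℝ) * (T ω - g₀ (X ω)) ^ (r - 1) + (r : ℝ) * c ω)) μ := by
        intro hF
        apply hic
        have e2 : (fun ω => c ω * ((Y ω - θ₀ * T ω - f₀ (X ω)) - θ₀ * (T ω - g₀ (X ω))))
            = fun ω => (r : ℝ)⁻¹ * ((θ₀ * ((T ω - g₀ (X ω)) ^ r - Cr ω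
                  - (r : ℝ) * (T ω - g₀ (X ω)) * c ω)
                + (Y ω - θ₀ * T ω - f₀ (X ω)) *
                  (-(r : ℝ) * (T ω - g₀ (X ω)) ^ (r - 1) + (r : ℝ) * c ω))
              - (θ₀ * ((T ω - g₀ (X ω)) ^ r - Cr ω)
                + (-(r : ℝ)) * ((Y ω - θ₀ * T ω - f₀ (X ω))
                  * (T ω - g₀ (X ω)) ^ (r - 1)))) := by
          funext ω; field_simp; ring
        rw [e2]
        refine (hF.sub ?_).const_mul _
        exact (((hmom r).sub hCr_int).const_mul θ₀).add ((hmix (r - 1)).const_mul _)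
      rw [condExp_of_not_integrable hnot]
  · -- ∂m/∂μ
    have e : (fun ω => (Y ω - θ₀ * T ω - f₀ (X ω)) * (-(r : ℝ) * (T ω - g₀ (X ω))))
        = fun ω => (-(r : ℝ)) * ((Y ω - θ₀ * T ω - f₀ (X ω)) * (T ω - g₀ (X ω)) ^ 1) := by
      funext ω; ring
    rw [e]
    exact hconstmul _ _ (hεη 1)
end

section
/- In the partially linear regression model, the moment m(Z, θ, q, g, μ) = (Y − q − θ(T − g))·((T − g)^r − E[η^r|X] − r(T − g)μ) satisfies second-order orthogonality: all second-order mixed partial derivatives of m with respect to (q, g, μ), evaluated at (θ₀, q₀(X), g₀(X), E[η^{r−1}|X]), have conditional expectation zero given X almost surely. -/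
open MeasureTheory ProbabilityTheory Filter

/-- Second-order orthogonality of the PLR moment
`m(Z, θ, q, g, μ) = (Y − q − θ(T − g)) ((T − g)^r − E[η^r|X] − r(T − g)μ)`:
all second-order mixed partial derivatives in `(q, g, μ)`, evaluated at
`(θ₀, q₀(X), g₀(X), E[η^(r−1)|X])`, have conditional expectation zero given `X` a.s.
Here `η = T − g₀(X)`, `ε = Y − θ₀ T − f₀(X)`; the `qq` and `μμ` derivatives vanish
identically, and the others are listed explicitly. -/
theorem stmt9 {Ω β : Type*} [MeasurableSpace Ω] [MeasurableSpace β]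
    (μ : Measure Ω) [IsProbabilityMeasure μ]
    (X : Ω → β) (T Y : Ω → ℝ) (hX : Measurable X) (hT : Measurable T) (hY : Measurable Y)
    (f₀ g₀ : β → ℝ) (hf₀ : Measurable f₀) (hg₀ : Measurable g₀)
    (θ₀ : ℝ) (r : ℕ) (hr : 0 < r)
    (hεcond : μ[fun ω => Y ω - θ₀ * T ω - f₀ (X ω)
        | MeasurableSpace.comap (fun ω => (X ω, T ω)) inferInstance] =ᵐ[μ] 0)
    (hηcond : μ[fun ω => T ω - g₀ (X ω) | MeasurableSpace.comap X inferInstance] =ᵐ[μ] 0)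
    (hmom : ∀ k : ℕ, Integrable (fun ω => (T ω - g₀ (X ω)) ^ k) μ)
    (hmix : ∀ k : ℕ, Integrable (fun ω => (Y ω - θ₀ * T ω - f₀ (X ω)) * (T ω - g₀ (X ω)) ^ k) μ) :
    -- ∂²m/∂q² ≡ 0
    (μ[fun _ => (0 : ℝ) | MeasurableSpace.comap X inferInstance] =ᵐ[μ] 0)
    ∧
    -- ∂²m/∂q∂g at the truth
    (μ[fun ω =>
        (r : ℝ) * (T ω - g₀ (X ω)) ^ (r - 1)
          - (r : ℝ) * (μ[fun ω' => (T ω' - g₀ (X ω')) ^ (r - 1)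
              | MeasurableSpace.comap X inferInstance]) ω
      | MeasurableSpace.comap X inferInstance] =ᵐ[μ] 0)
    ∧
    -- ∂²m/∂q∂μ at the truth
    (μ[fun ω => (r : ℝ) * (T ω - g₀ (X ω))
      | MeasurableSpace.comap X inferInstance] =ᵐ[μ] 0)
    ∧
    -- ∂²m/∂g² at the truth
    (μ[fun ω =>
        2 * θ₀ * (-(r : ℝ) * (T ω - g₀ (X ω)) ^ (r - 1)
            + (r : ℝ) * (μ[fun ω' => (T ω' - g₀ (X ω')) ^ (r - 1)
                | MeasurableSpace.comap X inferInstance]) ω)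
          + (Y ω - θ₀ * T ω - f₀ (X ω)) * ((r : ℝ) * ((r : ℝ) - 1) * (T ω - g₀ (X ω)) ^ (r - 2))
      | MeasurableSpace.comap X inferInstance] =ᵐ[μ] 0)
    ∧
    -- ∂²m/∂g∂μ at the truth
    (μ[fun ω =>
        -θ₀ * (r : ℝ) * (T ω - g₀ (X ω)) + (r : ℝ) * (Y ω - θ₀ * T ω - f₀ (X ω))
      | MeasurableSpace.comap X inferInstance] =ᵐ[μ] 0)
    ∧
    -- ∂²m/∂μ² ≡ 0
    (μ[fun _ => (0 : ℝ) | MeasurableSpace.comap X inferInstance] =ᵐ[μ] 0) := by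
  have hm := hX.comap_le
  have hm2 := (hX.prodMk hT).comap_le
  set mX := MeasurableSpace.comap X inferInstance with hmXdef
  set mXT := MeasurableSpace.comap (fun ω => (X ω, T ω)) inferInstance with hmXTdef
  have hpm : Measurable[mXT] (fun ω => (X ω, T ω)) := Measurable.of_comap_le le_rfl
  have hXm : Measurable[mX] X := Measurable.of_comap_le le_rfl
  have hle : mX ≤ mXT := (measurable_fst.comp hpm).comap_le
  have hηm : ∀ k : ℕ, Measurable[mXT] (fun ω => (T ω - g₀ (X ω)) ^ k) := by
    intro k
    have hTm : Measurable[mXT] T := measurable_snd.comp hpm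
    have hgm : Measurable[mXT] (fun ω => g₀ (X ω)) :=
      ((hg₀.comp hXm).mono hle le_rfl)
    exact (hTm.sub hgm).pow_const k
  -- zero conditional expectation building block
  have hZ0 : μ[fun _ : Ω => (0 : ℝ)|mX] =ᵐ[μ] 0 := by
    have : μ[(0 : Ω → ℝ)|mX] = 0 := condExp_zero
    exact this ▸ Filter.EventuallyEq.rfl
  -- key : E[ε η^k | X] = 0
  have hε : Integrable (fun ω => Y ω - θ₀ * T ω - f₀ (X ω)) μ := by
    simpa using hmix 0
  have key : ∀ k : ℕ,
      μ[fun ω => (Y ω - θ₀ * T ω - f₀ (X ω)) * (T ω - g₀ (X ω)) ^ k|mX] =ᵐ[μ] 0 := by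
    intro k
    have hmul := condExp_mul_of_stronglyMeasurable_left (μ := μ) (m := mXT)
      (hηm k).stronglyMeasurable
      (f := fun ω => (T ω - g₀ (X ω)) ^ k) (g := fun ω => Y ω - θ₀ * T ω - f₀ (X ω))
      (by simpa [Pi.mul_def, mul_comm] using hmix k) hε
    have h0 : μ[fun ω => (Y ω - θ₀ * T ω - f₀ (X ω)) * (T ω - g₀ (X ω)) ^ k|mXT]
        =ᵐ[μ] 0 := by
      have heq : (fun ω => (Y ω - θ₀ * T ω - f₀ (X ω)) * (T ω - g₀ (X ω)) ^ k)
          = (fun ω => (T ω - g₀ (X ω)) ^ k) * (fun ω => Y ω - θ₀ * T ω - f₀ (X ω)) := by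
        funext ω; simp [mul_comm]
      rw [heq]
      refine hmul.trans ?_
      filter_upwards [hεcond] with ω hω
      simp [hω]
    calc μ[fun ω => (Y ω - θ₀ * T ω - f₀ (X ω)) * (T ω - g₀ (X ω)) ^ k|mX]
        =ᵐ[μ] μ[μ[fun ω => (Y ω - θ₀ * T ω - f₀ (X ω)) * (T ω - g₀ (X ω)) ^ k|mXT]|mX] :=
          (condExp_condExp_of_le hle hm2).symm
      _ =ᵐ[μ] μ[(0 : Ω → ℝ)|mX] := condExp_congr_ae h0
      _ =ᵐ[μ] 0 := by rw [condExp_zero]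
  -- combination helper
  have comb : ∀ (a b : ℝ) (F G : Ω → ℝ), Integrable F μ → Integrable G μ →
      μ[F|mX] =ᵐ[μ] 0 → μ[G|mX] =ᵐ[μ] 0 →
      μ[fun ω => a * F ω + b * G ω|mX] =ᵐ[μ] 0 := by
    intro a b F G hF hG h1 h2
    have heq : (fun ω => a * F ω + b * G ω) = a • F + b • G := by
      funext ω; simp [smul_eq_mul]
    rw [heq]
    calc μ[a • F + b • G|mX]
        =ᵐ[μ] μ[a • F|mX] + μ[b • G|mX] := condExp_add (hF.smul a) (hG.smul b) mX
      _ =ᵐ[μ] a • μ[F|mX] + b • μ[G|mX] :=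
          ((condExp_smul a F mX).add (condExp_smul b G mX))
      _ =ᵐ[μ] 0 := by
          filter_upwards [h1, h2] with ω h1ω h2ω
          simp [h1ω, h2ω]
  -- D : E[η^(r-1) - E[η^(r-1)|X] | X] = 0
  set cE := μ[fun ω' => (T ω' - g₀ (X ω')) ^ (r - 1)|mX] with hcE
  have hcEint : Integrable cE μ := integrable_condExp
  have hD : μ[fun ω => (T ω - g₀ (X ω)) ^ (r - 1) - cE ω|mX] =ᵐ[μ] 0 := by
    have hsub := condExp_sub (m := mX) (μ := μ) (hmom (r - 1)) hcEint
    have heq : (fun ω => (T ω - g₀ (X ω)) ^ (r - 1) - cE ω)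
        = (fun ω => (T ω - g₀ (X ω)) ^ (r - 1)) - cE := rfl
    rw [heq]
    refine hsub.trans ?_
    have hidem : μ[cE|mX] =ᵐ[μ] cE := condExp_condExp_of_le le_rfl hm
    filter_upwards [hidem] with ω hω
    rw [Pi.sub_apply, hω]; simp [hcE]
  have hDint : Integrable (fun ω => (T ω - g₀ (X ω)) ^ (r - 1) - cE ω) μ :=
    (hmom (r - 1)).sub hcEint
  have hη1 : μ[fun ω => T ω - g₀ (X ω)|mX] =ᵐ[μ] 0 := hηcond
  have hη1int : Integrable (fun ω => T ω - g₀ (X ω)) μ := by simpa using hmom 1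
  have hε0 : μ[fun ω => Y ω - θ₀ * T ω - f₀ (X ω)|mX] =ᵐ[μ] 0 := by
    simpa using key 0
  refine ⟨hZ0, ?_, ?_, ?_, ?_, hZ0⟩
  · -- q∂g
    have := comb (r : ℝ) 0 _ _ hDint (integrable_zero _ _ _) hD hZ0
    refine Filter.EventuallyEq.trans ?_ this
    refine condExp_congr_ae (Filter.EventuallyEq.of_eq ?_)
    funext ω; ring
  · -- q∂μ
    have := comb (r : ℝ) 0 _ _ hη1int (integrable_zero _ _ _) hη1 hZ0
    refine Filter.EventuallyEq.trans ?_ this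
    refine condExp_congr_ae (Filter.EventuallyEq.of_eq ?_)
    funext ω; ring
  · -- g²
    have := comb (-(2 * θ₀ * r)) ((r : ℝ) * ((r : ℝ) - 1)) _ _ hDint (hmix (r - 2))
      hD (key (r - 2))
    refine Filter.EventuallyEq.trans ?_ this
    refine condExp_congr_ae (Filter.EventuallyEq.of_eq ?_)
    funext ω; ring
  · -- g∂μ
    have := comb (-θ₀ * r) (r : ℝ) _ _ hη1int hε hη1 hε0
    refine Filter.EventuallyEq.trans ?_ this
    refine condExp_congr_ae (Filter.EventuallyEq.of_eq ?_)
    funext ω; ring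
end

section
/- Let α ∈ ℕ^ℓ with ‖α‖₁ = k+1 and suppose for each i there is κ_i ∈ (0, 2] with (1/‖α‖₁)∑_i α_i/κ_i ≥ 1/2 and n^{1/(κ_i‖α‖₁)}·‖ĥ_i − h_{0,i}‖_{2‖α‖₁} → 0 in probability. Then √n · ∏_{i=1}^ℓ ‖ĥ_i − h_{0,i}‖_{2‖α‖₁}^{α_i} → 0 in probability. -/
open MeasureTheory ProbabilityTheory Filter

/-- If `‖α‖₁ = k+1`, each `κ i ∈ (0,2]` with `(1/‖α‖₁) ∑ α i/κ i ≥ 1/2`, and for each `i`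
`n^(1/(κ i ‖α‖₁)) ‖ĥ_i − h_{0,i}‖_{2‖α‖₁} → 0` in probability (`A i n` denoting the random
norm `‖ĥ_i − h_{0,i}‖_{2‖α‖₁}` at sample size `n`), then
`√n ∏ i ‖ĥ_i − h_{0,i}‖_{2‖α‖₁}^(α i) → 0` in probability. -/
theorem stmt13 {Ω : Type*} [MeasurableSpace Ω] (μ : Measure Ω) [IsProbabilityMeasure μ]
    {ℓ : ℕ} (α : Fin ℓ → ℕ) (k : ℕ) (hα : ∑ i, α i = k + 1)
    (A : Fin ℓ → ℕ → Ω → ℝ) (hA : ∀ i n ω, 0 ≤ A i n ω)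
    (hAmeas : ∀ i n, Measurable (A i n))
    (κ : Fin ℓ → ℝ) (hκ : ∀ i, κ i ∈ Set.Ioc (0 : ℝ) 2)
    (hsum : (1 / ((k : ℝ) + 1)) * ∑ i, (α i : ℝ) / κ i ≥ 1 / 2)
    (hconv : ∀ i, TendstoInMeasure μ
      (fun (n : ℕ) ω => (n : ℝ) ^ ((1 : ℝ) / (κ i * ((k : ℝ) + 1))) * A i n ω) atTop
      (fun _ => (0 : ℝ))) :
    TendstoInMeasure μ (fun (n : ℕ) ω => Real.sqrt n * ∏ i, A i n ω ^ (α i)) atTop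
      (fun _ => (0 : ℝ)) := by
  rw [tendstoInMeasure_iff_dist]
  intro ε hε
  set δ := min 1 ε / 2 with hδdef
  have hδpos : 0 < δ := by positivity
  have hδ1 : δ ≤ 1 := by
    have := min_le_left (1:ℝ) ε; simp only [hδdef]; linarith
  have hδε : δ < ε := by
    have := min_le_right (1:ℝ) ε; simp only [hδdef]; linarith
  have hkey : ∀ n : ℕ,
      {ω | ε ≤ dist (Real.sqrt n * ∏ i, A i n ω ^ (α i)) 0}
      ⊆ ⋃ i, {ω | δ ≤ dist ((n:ℝ) ^ ((1:ℝ)/(κ i * ((k:ℝ)+1))) * A i n ω) 0} := by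
    intro n ω hω
    simp only [Set.mem_setOf_eq, Real.dist_0_eq_abs] at hω
    by_contra hcon
    simp only [Set.mem_iUnion, Set.mem_setOf_eq, Real.dist_0_eq_abs, not_exists, not_le] at hcon
    have hYnn : ∀ i, 0 ≤ (n:ℝ) ^ ((1:ℝ)/(κ i * ((k:ℝ)+1))) * A i n ω := fun i =>
      mul_nonneg (Real.rpow_nonneg (Nat.cast_nonneg n) _) (hA i n ω)
    have hYδ : ∀ i, (n:ℝ) ^ ((1:ℝ)/(κ i * ((k:ℝ)+1))) * A i n ω < δ := fun i => by
      have := hcon i; rwa [abs_of_nonneg (hYnn i)] at this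
    have hprodnn : (0:ℝ) ≤ ∏ i, A i n ω ^ (α i) :=
      Finset.prod_nonneg fun i _ => pow_nonneg (hA i n ω) _
    have hle1 : Real.sqrt n * ∏ i, A i n ω ^ (α i)
        ≤ ∏ i, ((n:ℝ) ^ ((1:ℝ)/(κ i * ((k:ℝ)+1))) * A i n ω) ^ (α i) := by
      rcases Nat.eq_zero_or_pos n with rfl | hn
      · simp only [Nat.cast_zero, Real.sqrt_zero, zero_mul]
        exact_mod_cast Finset.prod_nonneg fun i _ => pow_nonneg (hYnn i) _
      · have hn1 : (1:ℝ) ≤ (n:ℝ) := by exact_mod_cast hn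
        have hexp : ∀ i : Fin ℓ, ((n:ℝ) ^ ((1:ℝ)/(κ i * ((k:ℝ)+1)))) ^ (α i)
            = (n:ℝ) ^ (((1:ℝ)/(κ i * ((k:ℝ)+1))) * (α i)) := fun i => by
          rw [← Real.rpow_natCast ((n:ℝ) ^ ((1:ℝ)/(κ i * ((k:ℝ)+1)))) (α i),
            ← Real.rpow_mul (Nat.cast_nonneg n)]
        calc Real.sqrt n * ∏ i, A i n ω ^ (α i)
            ≤ (n:ℝ) ^ (∑ i, ((1:ℝ)/(κ i * ((k:ℝ)+1))) * (α i)) * ∏ i, A i n ω ^ (α i) := by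
              apply mul_le_mul_of_nonneg_right _ hprodnn
              rw [Real.sqrt_eq_rpow]
              apply Real.rpow_le_rpow_of_exponent_le hn1
              have hsum' : ∑ i, ((1:ℝ)/(κ i * ((k:ℝ)+1))) * (α i)
                  = (1 / ((k : ℝ) + 1)) * ∑ i, (α i : ℝ) / κ i := by
                rw [Finset.mul_sum]
                apply Finset.sum_congr rfl
                intro i _
                have hκi : κ i ≠ 0 := ne_of_gt (hκ i).1
                have hk1 : ((k:ℝ)+1) ≠ 0 := by positivity
                field_simp
              rw [hsum']; exact hsum
          _ = ∏ i, ((n:ℝ) ^ ((1:ℝ)/(κ i * ((k:ℝ)+1))) * A i n ω) ^ (α i) := by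
              rw [Finset.prod_congr rfl (fun i _ => mul_pow _ _ _),
                Finset.prod_mul_distrib, Finset.prod_congr rfl (fun i _ => hexp i),
                ← Real.rpow_sum_of_pos (by linarith : (0:ℝ) < (n:ℝ))]
    have hle2 : ∏ i, ((n:ℝ) ^ ((1:ℝ)/(κ i * ((k:ℝ)+1))) * A i n ω) ^ (α i) ≤ δ ^ (k+1) := by
      rw [← hα, ← Finset.prod_pow_eq_pow_sum]
      exact Finset.prod_le_prod (fun i _ => pow_nonneg (hYnn i) _)
        (fun i _ => pow_le_pow_left₀ (hYnn i) (hYδ i).le _)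
    have hle3 : δ ^ (k+1) ≤ δ := pow_le_of_le_one hδpos.le hδ1 (Nat.succ_ne_zero k)
    have habs : |Real.sqrt n * ∏ i, A i n ω ^ (α i)| = Real.sqrt n * ∏ i, A i n ω ^ (α i) :=
      abs_of_nonneg (mul_nonneg (Real.sqrt_nonneg _) hprodnn)
    rw [habs] at hω
    linarith
  have hsumconv : Tendsto (fun n : ℕ => ∑ i : Fin ℓ,
      μ {ω | δ ≤ dist ((n:ℝ) ^ ((1:ℝ)/(κ i * ((k:ℝ)+1))) * A i n ω) 0}) atTop (nhds 0) := by
    have := tendsto_finset_sum (Finset.univ : Finset (Fin ℓ))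
      (fun i _ => tendstoInMeasure_iff_dist.mp (hconv i) δ hδpos)
    simpa using this
  refine tendsto_of_tendsto_of_tendsto_of_le_of_le tendsto_const_nhds hsumconv
    (fun n => zero_le') (fun n => ?_)
  calc μ {ω | ε ≤ dist (Real.sqrt n * ∏ i, A i n ω ^ (α i)) 0}
      ≤ μ (⋃ i, {ω | δ ≤ dist ((n:ℝ) ^ ((1:ℝ)/(κ i * ((k:ℝ)+1))) * A i n ω) 0}) :=
        measure_mono (hkey n)
    _ ≤ ∑' i, μ {ω | δ ≤ dist ((n:ℝ) ^ ((1:ℝ)/(κ i * ((k:ℝ)+1))) * A i n ω) 0} :=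
        measure_iUnion_le _
    _ = ∑ i, μ {ω | δ ≤ dist ((n:ℝ) ^ ((1:ℝ)/(κ i * ((k:ℝ)+1))) * A i n ω) 0} := tsum_fintype _
end
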